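/- Let 𝔉¹_τ be the set of collectible witness DAGs G with w_{p^{1−ε}}(G) < τ and w_{p^{1−ε}}(H) ≥ τ for all collectible strict prefixes H of G. Then w(𝔉¹_τ) ≤ τ^ε · W_ε, where w(𝔉¹_τ) = Σ_{G ∈ 𝔉¹_τ} w(G), W_ε = Σ_B α_{p^{1−ε}}(B), and ε ∈ (0,1/2), τ ∈ (0,1/2). -/

import Mathlib

open scoped ENNReal BigOperators Classical

noncomputable section

variable {β : Type*}

/-- A set of bad-events is stable if no two distinct members are dependent. -/
def IsStable (dep : β → β → Prop) (I : Finset β) : Prop :=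
  ∀ A ∈ I, ∀ B ∈ I, A ≠ B → ¬ dep A B

/-- Inclusive neighborhood Γ̄(B) = Γ(B) ∪ {B}. -/
def inclNbhd [Fintype β] (dep : β → β → Prop) (B : β) : Finset β :=
  Finset.univ.filter fun A => A = B ∨ dep A B

/-- Neighborhood Γ(B). -/
def nbhd [Fintype β] (dep : β → β → Prop) (B : β) : Finset β :=
  Finset.univ.filter fun A => A ≠ B ∧ dep A B

/-- stab(I): all stable subsets of ⋃_{B ∈ I} Γ̄(B). -/
def stab [Fintype β] (dep : β → β → Prop) (I : Finset β) : Finset (Finset β) :=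
  Finset.univ.filter fun J => IsStable dep J ∧ J ⊆ I.biUnion (inclNbhd dep)

/-- A stable-set sequence rooted at `I`. -/
structure StableSeq [Fintype β] (dep : β → β → Prop) (I : Finset β) where
  seq : ℕ → Finset β
  root : seq 0 = I
  stable : ∀ i, IsStable dep (seq i)
  step : ∀ i, seq (i + 1) ∈ stab dep (seq i)
  fin : ∃ ℓ, seq ℓ = ∅

/-- The depth of a stable-set sequence: the least ℓ with S_ℓ = ∅. -/
def StableSeq.depth [Fintype β] {dep : β → β → Prop} {I : Finset β}
    (S : StableSeq dep I) : ℕ :=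
  Nat.find S.fin

/-- The weight Π_i p(S_i) of a stable-set sequence. -/
def StableSeq.weight [Fintype β] {dep : β → β → Prop} {I : Finset β}
    (p : β → ℝ≥0∞) (S : StableSeq dep I) : ℝ≥0∞ :=
  ∏ i ∈ Finset.range S.depth, ∏ B ∈ S.seq i, p B

/-- μ(I): total weight of all stable-set sequences rooted at I. -/
def mu [Fintype β] (dep : β → β → Prop) (p : β → ℝ≥0∞) (I : Finset β) : ℝ≥0∞ :=
  ∑' S : StableSeq dep I, S.weight p

/-- μ^{(h)}(I): total weight of stable-set sequences rooted at I of depth ≤ h. -/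
def muD [Fintype β] (dep : β → β → Prop) (p : β → ℝ≥0∞) (I : Finset β) (h : ℕ) : ℝ≥0∞ :=
  ∑' S : {S : StableSeq dep I // S.depth ≤ h}, S.1.weight p

/-- α(B) = Σ_{J ∈ stab(B)} μ(J). -/
def alphaB [Fintype β] (dep : β → β → Prop) (p : β → ℝ≥0∞) (B : β) : ℝ≥0∞ :=
  ∑ J ∈ stab dep {B}, mu dep p J

/-- The Shearer criterion: μ(B) < ∞ for all bad-events B. -/
def ShearerCrit [Fintype β] (dep : β → β → Prop) (p : β → ℝ≥0∞) : Prop :=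
  ∀ B : β, mu dep p {B} < ⊤

/-- A witness DAG over bad-events β with dependency relation `dep`: a finite
acyclic labeled digraph in which two distinct vertices are joined by an edge
(in one direction or the other) iff their labels are dependent. Vertices are
drawn from ℕ. -/
structure WDag (β : Type*) (dep : β → β → Prop) where
  verts : Finset ℕ
  Edge : ℕ → ℕ → Prop
  label : ℕ → β
  support : ∀ u v, Edge u v → u ∈ verts ∧ v ∈ verts
  acyclic : ∀ v, ¬ Relation.TransGen Edge v v
  edge_iff : ∀ u ∈ verts, ∀ v ∈ verts, u ≠ v →
    ((Edge u v ∨ Edge v u) ↔ dep (label u) (label v))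

namespace WDag

variable {dep : β → β → Prop}

/-- depth(G): the maximum length of a directed path in G. -/
def depth (G : WDag β dep) : ℕ :=
  sSup {n | ∃ l : List ℕ, (∀ x ∈ l, x ∈ G.verts) ∧ l.Chain' G.Edge ∧ l.length = n}

/-- v is a sink node of G. -/
def IsSink (G : WDag β dep) (v : ℕ) : Prop :=
  v ∈ G.verts ∧ ∀ w, ¬ G.Edge v w

/-- G has exactly one sink node. -/
def SingleSink (G : WDag β dep) : Prop := ∃! v, G.IsSink v

/-- H is a prefix of G: an induced subgraph closed under taking in-neighbors
(equivalently, H = G(U), the set of vertices with a directed path into U, for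
some vertex set U). -/
def IsPrefix (H G : WDag β dep) : Prop :=
  H.verts ⊆ G.verts ∧ (∀ v ∈ H.verts, H.label v = G.label v) ∧
    (∀ u v, H.Edge u v ↔ (G.Edge u v ∧ u ∈ H.verts ∧ v ∈ H.verts)) ∧
    (∀ u v, G.Edge u v → v ∈ H.verts → u ∈ H.verts)

end WDag

namespace WDag

variable {dep : β → β → Prop}

/-- The weight w_q(G) = Π_{v ∈ G} q(L(v)). -/
def wt (G : WDag β dep) (q : β → ℝ≥0∞) : ℝ≥0∞ :=
  ∏ v ∈ G.verts, q (G.label v)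

/-- sink(G): the (stable) set of labels of sink nodes. -/
def sinkSet (G : WDag β dep) : Finset β :=
  (G.verts.filter fun v => ∀ w, ¬ G.Edge v w).image G.label

/-- G is collectible: sink(G) ∈ stab(B) for some bad-event B. -/
def Collectible [Fintype β] (G : WDag β dep) : Prop :=
  ∃ B : β, G.sinkSet ∈ stab dep {B}

end WDag

/-- Membership in 𝔉¹_τ: a collectible wdag G with w_{p^{1-ε}}(G) < τ all of
whose collectible strict prefixes H satisfy w_{p^{1-ε}}(H) ≥ τ. -/
def memF1 [Fintype β] (dep : β → β → Prop) (p : β → ℝ≥0∞) (ε τ : ℝ)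
    (G : WDag β dep) : Prop :=
  G.Collectible ∧ G.wt (fun B => p B ^ ((1 : ℝ) - ε)) < ENNReal.ofReal τ ∧
    ∀ H : WDag β dep, H.IsPrefix G → H.verts ≠ G.verts → H.Collectible →
      ENNReal.ofReal τ ≤ H.wt (fun B => p B ^ ((1 : ℝ) - ε))

/-- Isomorphism of witness DAGs: a bijection of the vertex sets preserving
labels and edges. -/
def WDag.Iso {dep : β → β → Prop} (G H : WDag β dep) : Prop :=
  ∃ e : ℕ → ℕ, Set.BijOn e ↑G.verts ↑H.verts ∧
    (∀ v ∈ G.verts, H.label (e v) = G.label v) ∧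
    (∀ u ∈ G.verts, ∀ v ∈ G.verts, (G.Edge u v ↔ H.Edge (e u) (e v)))

section Aux
open Relation Finset

variable (R : ℕ → ℕ → Prop) (V : Finset ℕ)

def Dset : ℕ → Finset ℕ
  | 0 => ∅
  | n+1 => V.filter (fun v => ∀ u, R v u → u ∈ Dset n)

lemma Dset_subset : ∀ n, Dset R V n ⊆ V
  | 0 => by simp [Dset]
  | n+1 => Finset.filter_subset _ _

lemma Dset_mono : ∀ n, Dset R V n ⊆ Dset R V (n+1)
  | 0 => by simp [Dset]
  | n+1 => by
    intro v hv
    rw [Dset, Finset.mem_filter] at hv ⊢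
    exact ⟨hv.1, fun u hu => Dset_mono n (hv.2 u hu)⟩

lemma Dset_mono_le {m n : ℕ} (h : m ≤ n) : Dset R V m ⊆ Dset R V n := by
  induction n with
  | zero => simpa [Nat.le_zero.mp h]
  | succ n ih =>
    rcases Nat.lt_or_ge m (n+1) with h' | h'
    · exact (ih (Nat.lt_succ_iff.mp h')).trans (Dset_mono R V n)
    · have : m = n+1 := le_antisymm h h'
      simp [this]

lemma exists_sink (hacyc : ∀ v, ¬ Relation.TransGen R v v) :
    ∀ (n : ℕ) (S : Finset ℕ), S.card = n → S.Nonempty →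
      ∃ v ∈ S, ∀ u ∈ S, ¬ R v u := by
  intro n
  induction n using Nat.strong_induction_on with
  | _ n ih =>
    intro S hcard hne
    obtain ⟨v, hv⟩ := hne
    by_cases h : ∀ u ∈ S, ¬ R v u
    · exact ⟨v, hv, h⟩
    · push_neg at h
      obtain ⟨u, hu, hR⟩ := h
      set S' := S.filter (fun w => Relation.TransGen R v w) with hS'
      have hune : u ∈ S' := Finset.mem_filter.2 ⟨hu, .single hR⟩
      have hvS' : v ∉ S' := by
        intro hmem
        exact hacyc v (Finset.mem_filter.1 hmem).2
      have hss : S' ⊂ S :=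
        (Finset.ssubset_iff_of_subset (Finset.filter_subset _ _)).2 ⟨v, hv, hvS'⟩
      have hlt : S'.card < n := hcard ▸ Finset.card_lt_card hss
      obtain ⟨w, hw, hws⟩ := ih _ hlt S' rfl ⟨u, hune⟩
      refine ⟨w, Finset.filter_subset _ _ hw, fun x hx hRwx => ?_⟩
      have hxS' : x ∈ S' :=
        Finset.mem_filter.2 ⟨hx, ((Finset.mem_filter.1 hw).2).tail hRwx⟩
      exact hws x hxS' hRwx

lemma Dset_sat (hsupp : ∀ a b, R a b → a ∈ V ∧ b ∈ V)
    (hacyc : ∀ v, ¬ Relation.TransGen R v v) :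
    ∀ v ∈ V, ∃ n, v ∈ Dset R V n := by
  have key : ∀ n, V ⊆ Dset R V n ∨ n ≤ (Dset R V n).card := by
    intro n
    induction n with
    | zero => exact Or.inr (Nat.zero_le _)
    | succ n ih =>
      rcases ih with h | h
      · exact Or.inl (h.trans (Dset_mono R V n))
      · by_cases hV : V ⊆ Dset R V n
        · exact Or.inl (hV.trans (Dset_mono R V n))
        · obtain ⟨x, hxV, hxD⟩ := Finset.not_subset.1 hV
          obtain ⟨w, hw, hws⟩ := exists_sink R hacyc _ (V \ Dset R V n) rfl
            ⟨x, Finset.mem_sdiff.2 ⟨hxV, hxD⟩⟩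
          have hwV : w ∈ V := (Finset.mem_sdiff.1 hw).1
          have hwD : w ∉ Dset R V n := (Finset.mem_sdiff.1 hw).2
          have hwD1 : w ∈ Dset R V (n+1) := by
            rw [Dset, Finset.mem_filter]
            refine ⟨hwV, fun u hu => ?_⟩
            by_contra hnot
            exact hws u (Finset.mem_sdiff.2 ⟨(hsupp w u hu).2, hnot⟩) hu
          have hss : Dset R V n ⊂ Dset R V (n+1) :=
            (Finset.ssubset_iff_of_subset (Dset_mono R V n)).2 ⟨w, hwD1, hwD⟩
          exact Or.inr (Nat.succ_le_of_lt (lt_of_le_of_lt h (Finset.card_lt_card hss)))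
  intro v hv
  rcases key (V.card + 1) with h | h
  · exact ⟨V.card + 1, h hv⟩
  · exact absurd (h.trans (Finset.card_le_card (Dset_subset R V _))) (by omega)

def rnk (v : ℕ) : ℕ := sInf {n | v ∈ Dset R V (n+1)}

lemma rnk_mem (hsupp : ∀ a b, R a b → a ∈ V ∧ b ∈ V)
    (hacyc : ∀ v, ¬ Relation.TransGen R v v) {v : ℕ} (hv : v ∈ V) :
    v ∈ Dset R V (rnk R V v + 1) := by
  obtain ⟨n, hn⟩ := Dset_sat R V hsupp hacyc v hv
  have hne : {n | v ∈ Dset R V (n+1)}.Nonempty := by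
    cases n with
    | zero => simp [Dset] at hn
    | succ n => exact ⟨n, hn⟩
  exact Nat.sInf_mem hne

lemma rnk_notmem (v : ℕ) : v ∉ Dset R V (rnk R V v) := by
  rcases h : rnk R V v with _ | m
  · simp [Dset]
  · intro hmem
    have h2 : rnk R V v ≤ m := Nat.sInf_le hmem
    omega
    
lemma rnk_lt_of_rel (hsupp : ∀ a b, R a b → a ∈ V ∧ b ∈ V)
    (hacyc : ∀ v, ¬ Relation.TransGen R v v) {v u : ℕ} (h : R v u) :
    rnk R V u < rnk R V v := by
  have hv : v ∈ V := (hsupp v u h).1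
  have hu2 : u ∈ Dset R V (rnk R V v) := by
    have hm := rnk_mem R V hsupp hacyc hv
    rw [Dset, Finset.mem_filter] at hm
    exact hm.2 u h
  by_contra hle
  push_neg at hle
  exact rnk_notmem R V u (Dset_mono_le R V hle hu2)

lemma rnk_succ_exists (hsupp : ∀ a b, R a b → a ∈ V ∧ b ∈ V)
    (hacyc : ∀ v, ¬ Relation.TransGen R v v) {v : ℕ} (hv : v ∈ V) {i : ℕ}
    (h : rnk R V v = i + 1) : ∃ u, R v u ∧ rnk R V u = i := by
  have hnm : v ∉ Dset R V (i+1) := h ▸ rnk_notmem R V v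
  rw [Dset, Finset.mem_filter] at hnm
  push_neg at hnm
  obtain ⟨u, hu, huD⟩ := hnm hv
  refine ⟨u, hu, ?_⟩
  have h1 : rnk R V u < rnk R V v := rnk_lt_of_rel R V hsupp hacyc hu
  have h2 : ¬ (rnk R V u + 1 ≤ i) := by
    intro hle
    exact huD (Dset_mono_le R V hle (rnk_mem R V hsupp hacyc (hsupp v u hu).2))
  omega

lemma rnk_zero_of_sink {v : ℕ} (hv : v ∈ V) (h : ∀ u, ¬ R v u) :
    rnk R V v = 0 := by
  have : v ∈ Dset R V 1 := by
    rw [Dset, Finset.mem_filter]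
    exact ⟨hv, fun u hu => absurd hu (h u)⟩
  exact Nat.le_zero.mp (Nat.sInf_le this)

lemma rnk_sink_of_zero (hsupp : ∀ a b, R a b → a ∈ V ∧ b ∈ V)
    (hacyc : ∀ v, ¬ Relation.TransGen R v v) {v : ℕ} (h : rnk R V v = 0) :
    ∀ u, ¬ R v u := by
  intro u hu
  have := rnk_lt_of_rel R V hsupp hacyc hu
  omega

end Aux

section WAux
open Relation Finset
variable {β : Type*} {dep : β → β → Prop}

namespace WDag

def hgt (G : WDag β dep) (v : ℕ) : ℕ := rnk G.Edge G.verts v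

def AEdge (G : WDag β dep) (u v : ℕ) : Prop :=
  G.Edge u v ∨ (u ∈ G.verts ∧ v ∈ G.verts ∧ u ≠ v ∧ G.label u = G.label v ∧
    (G.hgt v < G.hgt u ∨ (G.hgt v = G.hgt u ∧ v < u)))

lemma hgt_lt (G : WDag β dep) {u v : ℕ} (h : G.Edge u v) : G.hgt v < G.hgt u :=
  rnk_lt_of_rel _ _ G.support G.acyclic h

def klt (G : WDag β dep) (a b : ℕ) : Prop :=
  G.hgt a < G.hgt b ∨ (G.hgt a = G.hgt b ∧ a < b)

lemma klt_of_AEdge (G : WDag β dep) {u v : ℕ} (h : G.AEdge u v) : G.klt v u := by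
  rcases h with h | ⟨_, _, _, _, h⟩
  · exact Or.inl (G.hgt_lt h)
  · exact h

lemma klt_trans (G : WDag β dep) {a b c : ℕ} (h1 : G.klt a b) (h2 : G.klt b c) :
    G.klt a c := by
  unfold WDag.klt at *
  omega

lemma AEdge_acyclic (G : WDag β dep) : ∀ v, ¬ Relation.TransGen G.AEdge v v := by
  have key : ∀ a b, Relation.TransGen G.AEdge a b → G.klt b a := by
    intro a b h
    induction h with
    | single h => exact G.klt_of_AEdge h
    | tail _ h ih => exact G.klt_trans (G.klt_of_AEdge h) ih
  intro v hv
  have h := key v v hv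
  unfold WDag.klt at h
  omega

lemma AEdge_supp (G : WDag β dep) :
    ∀ a b, G.AEdge a b → a ∈ G.verts ∧ b ∈ G.verts := by
  intro a b h
  rcases h with h | ⟨h1, h2, _⟩
  exacts [G.support a b h, ⟨h1, h2⟩]

def rk (G : WDag β dep) (v : ℕ) : ℕ := rnk G.AEdge G.verts v

lemma rk_lt (G : WDag β dep) {u v : ℕ} (h : G.AEdge u v) : G.rk v < G.rk u :=
  rnk_lt_of_rel _ _ G.AEdge_supp G.AEdge_acyclic h

lemma edge_ne (G : WDag β dep) {u v : ℕ} (h : G.Edge u v) : u ≠ v := by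
  intro he
  subst he
  exact G.acyclic u (Relation.TransGen.single h)

lemma rk_label_inj (G : WDag β dep) {u v : ℕ} (hu : u ∈ G.verts) (hv : v ∈ G.verts)
    (hl : G.label u = G.label v) (hr : G.rk u = G.rk v) : u = v := by
  by_contra hne
  have htri : G.klt u v ∨ G.klt v u := by
    unfold WDag.klt
    omega
  rcases htri with h | h
  · have := G.rk_lt (u := v) (v := u)
      (Or.inr ⟨hv, hu, Ne.symm hne, hl.symm, h⟩)
    omega
  · have := G.rk_lt (u := u) (v := v)
      (Or.inr ⟨hu, hv, hne, hl, h⟩)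
    omega

lemma rk_eq_not_dep (G : WDag β dep) {u v : ℕ} (hu : u ∈ G.verts) (hv : v ∈ G.verts)
    (hne : u ≠ v) (hr : G.rk u = G.rk v) : ¬ dep (G.label u) (G.label v) := by
  intro hdep
  rcases (G.edge_iff u hu v hv hne).2 hdep with h | h
  · have := G.rk_lt (Or.inl h); omega
  · have := G.rk_lt (Or.inl h); omega

lemma edge_char (G : WDag β dep) {u v : ℕ} (hu : u ∈ G.verts) (hv : v ∈ G.verts) :
    G.Edge u v ↔ dep (G.label u) (G.label v) ∧ G.rk v < G.rk u := by
  constructor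
  · intro h
    exact ⟨(G.edge_iff u hu v hv (G.edge_ne h)).1 (Or.inl h), G.rk_lt (Or.inl h)⟩
  · rintro ⟨hdep, hlt⟩
    have hne : u ≠ v := by rintro rfl; exact absurd hlt (lt_irrefl _)
    rcases (G.edge_iff u hu v hv hne).2 hdep with h | h
    · exact h
    · have := G.rk_lt (Or.inl h); omega

lemma rk_succ (G : WDag β dep) {v : ℕ} {i : ℕ} (hv : v ∈ G.verts)
    (h : G.rk v = i + 1) :
    ∃ u ∈ G.verts, G.rk u = i ∧
      (G.label v = G.label u ∨ dep (G.label v) (G.label u)) := by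
  obtain ⟨u, hA, hru⟩ := rnk_succ_exists _ _ G.AEdge_supp G.AEdge_acyclic hv h
  have hu : u ∈ G.verts := (G.AEdge_supp v u hA).2
  refine ⟨u, hu, hru, ?_⟩
  rcases hA with hE | ⟨_, _, hne, hl, _⟩
  · exact Or.inr ((G.edge_iff v hv u hu (G.edge_ne hE)).1 (Or.inl hE))
  · exact Or.inl hl

def toSeq (G : WDag β dep) (i : ℕ) : Finset β :=
  (G.verts.filter (fun v => G.rk v = i)).image G.label

lemma toSeq_zero (G : WDag β dep) : G.toSeq 0 = G.sinkSet := by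
  apply Finset.Subset.antisymm
  · intro A hA
    obtain ⟨v, hv, hvA⟩ := Finset.mem_image.1 hA
    obtain ⟨hvV, hv0⟩ := Finset.mem_filter.1 hv
    refine Finset.mem_image.2 ⟨v, Finset.mem_filter.2 ⟨hvV, fun w hw => ?_⟩, hvA⟩
    exact rnk_sink_of_zero _ _ G.AEdge_supp G.AEdge_acyclic hv0 w (Or.inl hw)
  · intro A hA
    obtain ⟨s, hs, hsA⟩ := Finset.mem_image.1 hA
    obtain ⟨hsV, hsink⟩ := Finset.mem_filter.1 hs
    have hhgts : G.hgt s = 0 := rnk_zero_of_sink _ _ hsV hsink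
    set T := G.verts.filter (fun v => G.label v = A) with hT
    have hsT : s ∈ T := Finset.mem_filter.2 ⟨hsV, hsA⟩
    have hTne : T.Nonempty := ⟨s, hsT⟩
    have hTim : (T.image G.hgt).Nonempty := hTne.image _
    set h0 := (T.image G.hgt).min' hTim with hh0
    obtain ⟨m0, hm0T, hm0⟩ := Finset.mem_image.1 ((T.image G.hgt).min'_mem hTim)
    set T1 := T.filter (fun v => G.hgt v = h0) with hT1
    have hT1ne : T1.Nonempty := ⟨m0, Finset.mem_filter.2 ⟨hm0T, hm0⟩⟩
    set m := T1.min' hT1ne with hm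
    have hmT1 : m ∈ T1 := T1.min'_mem hT1ne
    obtain ⟨hmT, hmh⟩ := Finset.mem_filter.1 hmT1
    obtain ⟨hmV, hmA⟩ := Finset.mem_filter.1 hmT
    have hh00 : h0 = 0 := by
      have h1 : h0 ≤ G.hgt s :=
        Finset.min'_le _ _ (Finset.mem_image_of_mem _ hsT)
      omega
    have hsinkm : ∀ u, ¬ G.AEdge m u := by
      intro u hu
      rcases hu with hE | ⟨_, huV, hne, hlab, hk⟩
      · have := G.hgt_lt hE
        omega
      · have huT : u ∈ T := Finset.mem_filter.2 ⟨huV, hlab ▸ hmA⟩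
        have h2 : h0 ≤ G.hgt u :=
          Finset.min'_le _ _ (Finset.mem_image_of_mem _ huT)
        have h3 : G.hgt u = h0 := by omega
        have huT1 : u ∈ T1 := Finset.mem_filter.2 ⟨huT, h3⟩
        have h4 : m ≤ u := Finset.min'_le _ _ huT1
        omega
    refine Finset.mem_image.2 ⟨m, Finset.mem_filter.2 ⟨hmV, ?_⟩, hmA⟩
    exact rnk_zero_of_sink _ _ hmV hsinkm

lemma toSeq_contig (G : WDag β dep) {i : ℕ} (h : (G.toSeq (i+1)).Nonempty) :
    (G.toSeq i).Nonempty := by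
  obtain ⟨A, hA⟩ := h
  obtain ⟨v, hv, hvA⟩ := Finset.mem_image.1 hA
  obtain ⟨hvV, hvr⟩ := Finset.mem_filter.1 hv
  obtain ⟨u, hu, hru, -⟩ := G.rk_succ hvV hvr
  exact ⟨G.label u, Finset.mem_image.2 ⟨u, Finset.mem_filter.2 ⟨hu, hru⟩, rfl⟩⟩

lemma toSeq_nonempty_down (G : WDag β dep) :
    ∀ k i, (G.toSeq (i + k)).Nonempty → (G.toSeq i).Nonempty := by
  intro k
  induction k with
  | zero => exact fun i h => h
  | succ k ih =>
    intro i h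
    have h2 : (G.toSeq ((i + k) + 1)).Nonempty := by
      rwa [show i + (k+1) = (i+k)+1 by omega] at h
    exact ih i (G.toSeq_contig h2)

lemma toSeq_stable (G : WDag β dep) (i : ℕ) : IsStable dep (G.toSeq i) := by
  intro A hA B hB hne hdep
  obtain ⟨u, hu, rfl⟩ := Finset.mem_image.1 hA
  obtain ⟨v, hv, rfl⟩ := Finset.mem_image.1 hB
  obtain ⟨huV, hur⟩ := Finset.mem_filter.1 hu
  obtain ⟨hvV, hvr⟩ := Finset.mem_filter.1 hv
  have hne' : u ≠ v := fun he => hne (he ▸ rfl)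
  exact G.rk_eq_not_dep huV hvV hne' (hur.trans hvr.symm) hdep

lemma toSeq_step [Fintype β] (G : WDag β dep) (i : ℕ) :
    G.toSeq (i+1) ∈ stab dep (G.toSeq i) := by
  rw [stab, Finset.mem_filter]
  refine ⟨Finset.mem_univ _, G.toSeq_stable _, ?_⟩
  intro A hA
  obtain ⟨v, hv, rfl⟩ := Finset.mem_image.1 hA
  obtain ⟨hvV, hvr⟩ := Finset.mem_filter.1 hv
  obtain ⟨u, huV, hru, hor⟩ := G.rk_succ hvV hvr
  refine Finset.mem_biUnion.2 ⟨G.label u,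
    Finset.mem_image.2 ⟨u, Finset.mem_filter.2 ⟨huV, hru⟩, rfl⟩, ?_⟩
  rw [inclNbhd, Finset.mem_filter]
  exact ⟨Finset.mem_univ _, hor⟩

lemma toSeq_fin (G : WDag β dep) : ∃ ℓ, G.toSeq ℓ = ∅ := by
  refine ⟨G.verts.sup G.rk + 1, Finset.eq_empty_iff_forall_notMem.2 ?_⟩
  intro A hA
  obtain ⟨v, hv, -⟩ := Finset.mem_image.1 hA
  obtain ⟨hvV, hvr⟩ := Finset.mem_filter.1 hv
  have := Finset.le_sup (f := G.rk) hvV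
  omega

def toSS [Fintype β] (G : WDag β dep) : StableSeq dep G.sinkSet where
  seq := G.toSeq
  root := G.toSeq_zero
  stable := G.toSeq_stable
  step := G.toSeq_step
  fin := G.toSeq_fin

lemma toSS_weight [Fintype β] (G : WDag β dep) (q : β → ℝ≥0∞) :
    (G.toSS).weight q = G.wt q := by
  have hN : G.toSeq (G.toSS.depth) = ∅ := Nat.find_spec G.toSS.fin
  set N := G.toSS.depth with hNdef
  have hrk : ∀ v ∈ G.verts, G.rk v < N := by
    intro v hv
    by_contra hcon
    push_neg at hcon
    have hne : (G.toSeq (N + (G.rk v - N))).Nonempty := by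
      rw [show N + (G.rk v - N) = G.rk v by omega]
      exact ⟨G.label v, Finset.mem_image.2 ⟨v, Finset.mem_filter.2 ⟨hv, rfl⟩, rfl⟩⟩
    obtain ⟨A, hA⟩ := G.toSeq_nonempty_down _ N hne
    rw [hN] at hA
    exact absurd hA (Finset.notMem_empty A)
  have hpart : ∏ i ∈ Finset.range N, ∏ v ∈ G.verts.filter (fun v => G.rk v = i),
      q (G.label v) = ∏ v ∈ G.verts, q (G.label v) :=
    Finset.prod_fiberwise_of_maps_to (fun v hv => Finset.mem_range.2 (hrk v hv)) _
  have hinner : ∀ i, ∏ B ∈ G.toSeq i, q B =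
      ∏ v ∈ G.verts.filter (fun v => G.rk v = i), q (G.label v) := by
    intro i
    refine Finset.prod_image ?_
    intro u hu v hv hl
    obtain ⟨huV, hur⟩ := Finset.mem_filter.1 hu
    obtain ⟨hvV, hvr⟩ := Finset.mem_filter.1 hv
    exact G.rk_label_inj huV hvV hl (hur.trans hvr.symm)
  rw [StableSeq.weight, WDag.wt, ← hpart]
  exact Finset.prod_congr rfl fun i _ => hinner i

lemma iso_of_toSeq_eq (G G' : WDag β dep) (h : ∀ i, G.toSeq i = G'.toSeq i) :
    G.Iso G' := by
  have hex : ∀ v, v ∈ G.verts → ∃ u, u ∈ G'.verts ∧ G'.rk u = G.rk v ∧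
      G'.label u = G.label v := by
    intro v hv
    have hmem : G.label v ∈ G'.toSeq (G.rk v) := by
      rw [← h]
      exact Finset.mem_image.2 ⟨v, Finset.mem_filter.2 ⟨hv, rfl⟩, rfl⟩
    obtain ⟨u, hu, hlab⟩ := Finset.mem_image.1 hmem
    obtain ⟨h1, h2⟩ := Finset.mem_filter.1 hu
    exact ⟨u, h1, h2, hlab⟩
  set e : ℕ → ℕ := fun v => if hv : v ∈ G.verts then Classical.choose (hex v hv) else 0
    with he
  have heP : ∀ v (hv : v ∈ G.verts), e v ∈ G'.verts ∧ G'.rk (e v) = G.rk v ∧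
      G'.label (e v) = G.label v := by
    intro v hv
    simp only [he, dif_pos hv]
    exact Classical.choose_spec (hex v hv)
  refine ⟨e, ⟨?_, ?_, ?_⟩, ?_, ?_⟩
  · intro v hv
    exact (heP v (Finset.mem_coe.1 hv)).1
  · intro a ha b hb hab
    have ha' := Finset.mem_coe.1 ha
    have hb' := Finset.mem_coe.1 hb
    obtain ⟨h1, h2, h3⟩ := heP a ha'
    obtain ⟨h4, h5, h6⟩ := heP b hb'
    exact G.rk_label_inj ha' hb' (by rw [← h3, ← h6, hab]) (by rw [← h2, ← h5, hab])
  · intro u hu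
    have hu' := Finset.mem_coe.1 hu
    have hmem : G'.label u ∈ G.toSeq (G'.rk u) := by
      rw [h]
      exact Finset.mem_image.2 ⟨u, Finset.mem_filter.2 ⟨hu', rfl⟩, rfl⟩
    obtain ⟨v, hvm, hlab⟩ := Finset.mem_image.1 hmem
    obtain ⟨hvV, hvr⟩ := Finset.mem_filter.1 hvm
    refine ⟨v, Finset.mem_coe.2 hvV, ?_⟩
    obtain ⟨h1, h2, h3⟩ := heP v hvV
    exact G'.rk_label_inj h1 hu' (by rw [h3, hlab]) (by rw [h2, hvr])
  · intro v hv
    exact (heP v hv).2.2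
  · intro u hu v hv
    obtain ⟨h1, h2, h3⟩ := heP u hu
    obtain ⟨h4, h5, h6⟩ := heP v hv
    rw [G.edge_char hu hv, G'.edge_char h1 h4, h3, h6, h2, h5]

end WDag

def castSS {β : Type*} [Fintype β] {dep : β → β → Prop} {I J : Finset β} (h : I = J)
    (S : StableSeq dep I) : StableSeq dep J where
  seq := S.seq
  root := h ▸ S.root
  stable := S.stable
  step := S.step
  fin := S.fin

namespace WDag

end WDag

end WAux

/-- w(𝔉¹_τ) ≤ τ^ε · W_ε, where W_ε = Σ_B α_{p^{1-ε}}(B):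
any finite collection of pairwise non-isomorphic wdags in 𝔉¹_τ has total
(unadjusted) weight at most τ^ε · W_ε. -/
theorem F1_weight_bound [Fintype β] (dep : β → β → Prop) (hsym : Symmetric dep)
    (p : β → ℝ≥0∞) (hp : ∀ B, p B ≤ 1) (ε τ : ℝ)
    (hε : 0 < ε ∧ ε < 1 / 2) (hτ : 0 < τ ∧ τ < 1 / 2)
    (𝒢 : Finset (WDag β dep)) (h𝒢 : ∀ G ∈ 𝒢, memF1 dep p ε τ G)
    (hdist : ∀ G ∈ 𝒢, ∀ H ∈ 𝒢, G ≠ H → ¬ G.Iso H) :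
    ∑ G ∈ 𝒢, G.wt p ≤
      ENNReal.ofReal (τ ^ ε) *
        ∑ B : β, alphaB dep (fun A => p A ^ ((1 : ℝ) - ε)) B := by
  classical
  obtain ⟨hε0, hε1⟩ := hε
  obtain ⟨hτ0, hτ1⟩ := hτ
  set q : β → ℝ≥0∞ := fun A => p A ^ ((1 : ℝ) - ε) with hqdef
  have h1ε : (0:ℝ) < 1 - ε := by linarith
  have stepA : ∀ G ∈ 𝒢, G.wt p ≤ ENNReal.ofReal (τ ^ ε) * G.wt q := by
    intro G hG
    obtain ⟨-, hWτ, -⟩ := h𝒢 G hG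
    by_cases hW0 : G.wt q = 0
    · have h0 : G.wt p = 0 := by
        rw [WDag.wt] at hW0 ⊢
        obtain ⟨v, hv, hqv⟩ := Finset.prod_eq_zero_iff.1 hW0
        have hpv : p (G.label v) = 0 := by
          rcases ENNReal.rpow_eq_zero_iff.1 hqv with ⟨h, -⟩ | ⟨-, hlt⟩
          · exact h
          · exact absurd hlt (by linarith)
        exact Finset.prod_eq_zero hv hpv
      simp [h0]
    · have hWtop : G.wt q ≠ ⊤ := hWτ.ne_top
      have hfac : ∀ A : β, q A ^ ((1:ℝ)/(1-ε)) = p A := by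
        intro A
        rw [hqdef]
        rw [← ENNReal.rpow_mul, show (1 - ε) * ((1:ℝ)/(1-ε)) = 1 by field_simp,
          ENNReal.rpow_one]
      have hwtp : G.wt p = (G.wt q) ^ ((1:ℝ)/(1-ε)) := by
        rw [WDag.wt, WDag.wt, ← ENNReal.prod_rpow_of_nonneg (by positivity)]
        exact Finset.prod_congr rfl fun v _ => (hfac (G.label v)).symm
      have hsplit : (G.wt q) ^ ((1:ℝ)/(1-ε)) = G.wt q * (G.wt q) ^ (ε/(1-ε)) := by
        rw [show (1:ℝ)/(1-ε) = 1 + ε/(1-ε) by field_simp; ring]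
        rw [ENNReal.rpow_add _ _ hW0 hWtop, ENNReal.rpow_one]
      have hb1 : (G.wt q) ^ (ε/(1-ε)) ≤ (ENNReal.ofReal τ) ^ (ε/(1-ε)) :=
        ENNReal.rpow_le_rpow hWτ.le (by positivity)
      have hb2 : (ENNReal.ofReal τ) ^ (ε/(1-ε)) ≤ (ENNReal.ofReal τ) ^ ε := by
        apply ENNReal.rpow_le_rpow_of_exponent_ge
        · exact ENNReal.ofReal_le_one.2 (by linarith)
        · rw [le_div_iff₀ h1ε]
          nlinarith
      have hb3 : (ENNReal.ofReal τ) ^ ε = ENNReal.ofReal (τ ^ ε) :=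
        ENNReal.ofReal_rpow_of_pos hτ0
      calc G.wt p = G.wt q * (G.wt q) ^ (ε/(1-ε)) := by rw [hwtp, hsplit]
        _ ≤ G.wt q * ENNReal.ofReal (τ ^ ε) :=
            mul_le_mul_right (hb3 ▸ hb1.trans hb2) _
        _ = ENNReal.ofReal (τ ^ ε) * G.wt q := mul_comm _ _
  have stepB : ∑ G ∈ 𝒢, G.wt q ≤ ∑ B : β, alphaB dep q B := by
    rcases Finset.eq_empty_or_nonempty 𝒢 with rfl | ⟨G₀, hG₀⟩
    · simp
    haveI : Nonempty β := ⟨G₀.label 0⟩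
    set Bof : WDag β dep → β := fun G =>
      if h : G.Collectible then Classical.choose h else Classical.arbitrary β with hBof
    have hBofspec : ∀ G ∈ 𝒢, G.sinkSet ∈ stab dep {Bof G} := by
      intro G hG
      have hc := (h𝒢 G hG).1
      rw [hBof]
      simp only [dif_pos hc]
      exact Classical.choose_spec hc
    have key : ∀ B : β, ∀ J ∈ stab dep ({B} : Finset β),
        ∑ G ∈ (𝒢.filter (fun G => Bof G = B)).filter (fun G => G.sinkSet = J), G.wt q
          ≤ mu dep q J := by
      intro B J hJ
      set s := (𝒢.filter (fun G => Bof G = B)).filter (fun G => G.sinkSet = J) with hs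
      have hmem : ∀ G ∈ s, G ∈ 𝒢 ∧ G.sinkSet = J := by
        intro G hG
        obtain ⟨hG1, hG2⟩ := Finset.mem_filter.1 hG
        exact ⟨(Finset.mem_filter.1 hG1).1, hG2⟩
      set m : {G // G ∈ s} → StableSeq dep J :=
        fun g => castSS (hmem g.1 g.2).2 g.1.toSS with hm
      have hmw : ∀ g : {G // G ∈ s}, (m g).weight q = g.1.wt q := fun g =>
        g.1.toSS_weight q
      have hmi : Function.Injective m := by
        intro g g' hgg
        have hseq : g.1.toSeq = g'.1.toSeq := congrArg StableSeq.seq hgg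
        have hiso : g.1.Iso g'.1 := WDag.iso_of_toSeq_eq _ _ (fun i => congrFun hseq i)
        by_contra hne
        have hne' : g.1 ≠ g'.1 := fun hh => hne (Subtype.ext hh)
        exact hdist g.1 (hmem g.1 g.2).1 g'.1 (hmem g'.1 g'.2).1 hne' hiso
      calc ∑ G ∈ s, G.wt q = ∑ g : {G // G ∈ s}, g.1.wt q :=
            (Finset.sum_coe_sort s _).symm
        _ = ∑' g : {G // G ∈ s}, (m g).weight q := by
            rw [tsum_fintype]
            exact Finset.sum_congr rfl fun g _ => (hmw g).symm
        _ ≤ ∑' S : StableSeq dep J, S.weight q :=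
            ENNReal.tsum_comp_le_tsum_of_injective hmi _
        _ = mu dep q J := rfl
    calc ∑ G ∈ 𝒢, G.wt q
        = ∑ B : β, ∑ G ∈ 𝒢.filter (fun G => Bof G = B), G.wt q :=
          (Finset.sum_fiberwise_of_maps_to (fun G _ => Finset.mem_univ _) _).symm
      _ = ∑ B : β, ∑ J ∈ stab dep ({B} : Finset β),
            ∑ G ∈ (𝒢.filter (fun G => Bof G = B)).filter (fun G => G.sinkSet = J),
              G.wt q := by
          refine Finset.sum_congr rfl fun B _ => ?_
          refine (Finset.sum_fiberwise_of_maps_to ?_ _).symm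
          intro G hG
          obtain ⟨hG1, hG2⟩ := Finset.mem_filter.1 hG
          exact hG2 ▸ hBofspec G hG1
      _ ≤ ∑ B : β, ∑ J ∈ stab dep ({B} : Finset β), mu dep q J :=
          Finset.sum_le_sum fun B _ => Finset.sum_le_sum fun J hJ => key B J hJ
      _ = ∑ B : β, alphaB dep q B := rfl
  calc ∑ G ∈ 𝒢, G.wt p ≤ ∑ G ∈ 𝒢, ENNReal.ofReal (τ ^ ε) * G.wt q :=
        Finset.sum_le_sum stepA
    _ = ENNReal.ofReal (τ ^ ε) * ∑ G ∈ 𝒢, G.wt q := (Finset.mul_sum _ _ _).symm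
    _ ≤ _ := mul_le_mul_right stepB _
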